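/- For every integer m ≥ 1, every 0 < ν < 1 and every b > 0, the limit as ε → 0⁺ of [∫_ε^∞ e^{-bx} x^{-m-ν} dx − Σ_{k=0}^{m-1} ((-b)^k/k!) ε^{k+1-m-ν}/(m+ν-k-1)] exists and equals (-1)^m b^{m+ν-1} π/(sin(πν) Γ(m+ν)), where Γ is the Gamma function. -/

import Mathlib

open Filter MeasureTheory Set Topology

noncomputable def gg (b : ℝ) (m : ℕ) (x : ℝ) : ℝ :=
  Real.exp (-b * x) - ∑ k ∈ Finset.range m, (-b * x) ^ k / Nat.factorial k

lemma gg_cont (b : ℝ) (m : ℕ) : Continuous (gg b m) := by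
  unfold gg; fun_prop

lemma gg_zero (b : ℝ) (m : ℕ) (hm : 1 ≤ m) : gg b m 0 = 0 := by
  unfold gg
  rw [Finset.sum_eq_single 0]
  · simp
  · intro k hk hk0; simp [zero_pow hk0]
  · intro h; simp at h; omega

lemma gg_deriv (b : ℝ) (m : ℕ) (x : ℝ) :
    HasDerivAt (gg b (m+1)) (-b * gg b m x) x := by
  have he : HasDerivAt (fun x : ℝ => Real.exp (-b * x)) (Real.exp (-b * x) * (-b)) x :=
    by simpa using ((hasDerivAt_id x).const_mul (-b)).exp
  have h1 : ∀ k ∈ Finset.range (m+1), HasDerivAt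
      (fun x : ℝ => (-b * x) ^ k / Nat.factorial k)
      (((k : ℝ) * (-b * x) ^ (k - 1) * (-b)) / Nat.factorial k) x := by
    intro k _
    simpa using (((hasDerivAt_id x).const_mul (-b)).pow k).div_const (Nat.factorial k : ℝ)
  have hs := HasDerivAt.fun_sum h1
  have H := he.sub hs
  have : Real.exp (-b * x) * (-b) -
      (∑ k ∈ Finset.range (m+1), ((k : ℝ) * (-b * x) ^ (k - 1) * (-b)) / Nat.factorial k)
      = -b * gg b m x := by
    rw [Finset.sum_range_succ']
    unfold gg
    simp only [Nat.cast_zero, zero_mul, pow_zero, Nat.factorial_zero, Nat.cast_one, zero_div,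
      add_zero, Nat.add_sub_cancel]
    rw [mul_sub, Finset.mul_sum]
    have : ∀ k ∈ Finset.range m, ((k:ℝ)+1) * (-b * x) ^ k * (-b) / Nat.factorial (k+1)
        = -b * ((-b*x)^k / Nat.factorial k) := by
      intro k _
      rw [Nat.factorial_succ]
      have hk : (Nat.factorial k : ℝ) ≠ 0 := by positivity
      push_cast
      field_simp
    rw [Finset.sum_congr rfl (by intro k hk; push_cast; rw [this k hk])]
    ring
  rw [this] at H
  exact H

lemma gg_bound (b : ℝ) (hb : 0 < b) (m : ℕ) : ∀ x : ℝ, 0 ≤ x →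
    |gg b m x| ≤ (b * x) ^ m / Nat.factorial m := by
  induction m with
  | zero =>
    intro x hx
    have : Real.exp (-b*x) ≤ 1 := by
      rw [Real.exp_le_one_iff]
      nlinarith
    simp only [gg, Finset.range_zero, Finset.sum_empty, sub_zero, pow_zero, Nat.factorial_zero,
      Nat.cast_one, div_one]
    rw [abs_of_pos (Real.exp_pos _)]
    exact this
  | succ m ih =>
    intro x hx
    have hftc : gg b (m+1) x - gg b (m+1) 0 = ∫ t in (0:ℝ)..x, -b * gg b m t := by
      rw [intervalIntegral.integral_eq_sub_of_hasDerivAt (fun t _ => gg_deriv b m t)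
        ((continuous_const.mul (gg_cont b m)).intervalIntegrable 0 x)]
    rw [gg_zero b (m+1) (by omega), sub_zero] at hftc
    rw [hftc, ← Real.norm_eq_abs]
    have hbi : IntervalIntegrable (fun t => b * ((b*t)^m / Nat.factorial m)) volume 0 x := by
      apply Continuous.intervalIntegrable; fun_prop
    have hle := intervalIntegral.norm_integral_le_abs_of_norm_le (μ := volume)
      (f := fun t => -b * gg b m t) (g := fun t => b * ((b*t)^m / Nat.factorial m))
      (a := 0) (b := x) ?_ hbi
    · refine hle.trans ?_
      have : ∫ t in (0:ℝ)..x, b * ((b*t)^m / Nat.factorial m)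
          = (b*x)^(m+1) / Nat.factorial (m+1) := by
        simp_rw [mul_pow, mul_div_assoc, intervalIntegral.integral_const_mul,
          intervalIntegral.integral_div, integral_pow]
        rw [Nat.factorial_succ]
        push_cast
        have hk : (Nat.factorial m : ℝ) ≠ 0 := by positivity
        field_simp
        ring
      rw [this, abs_of_nonneg (by positivity)]
    · filter_upwards [ae_restrict_mem measurableSet_uIoc] with t ht
      rw [uIoc_of_le hx] at ht
      have ht0 : 0 ≤ t := ht.1.le
      rw [Real.norm_eq_abs, abs_mul, abs_neg, abs_of_pos hb]
      exact mul_le_mul_of_nonneg_left (ih t ht0) hb.le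


lemma gmul_eq (b : ℝ) (m : ℕ) (r : ℝ) {x : ℝ} (hx : 0 < x) :
    gg b m x * x ^ (-r) =
      Real.exp (-b * x) * x ^ (-r)
        - ∑ k ∈ Finset.range m, ((-b) ^ k / Nat.factorial k) * x ^ ((k : ℝ) - r) := by
  unfold gg
  rw [sub_mul, Finset.sum_mul]
  congr 1
  apply Finset.sum_congr rfl
  intro k _
  rw [mul_pow, show ((k:ℝ) - r) = (k:ℝ) + (-r) by ring, Real.rpow_add hx,
    Real.rpow_natCast]
  ring

lemma gg_integrable (b : ℝ) (hb : 0 < b) (ν : ℝ) (hν0 : 0 < ν) (hν1 : ν < 1) (m : ℕ) :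
    IntegrableOn (fun x => gg b m x * x ^ (-((m : ℝ) + ν))) (Ioi 0) := by
  rw [← Ioc_union_Ioi_eq_Ioi (zero_le_one (α := ℝ))]
  apply IntegrableOn.union
  · -- on Ioc 0 1, dominate by C * x^(-ν)
    have hmeas : AEStronglyMeasurable (fun x : ℝ => gg b m x * x ^ (-((m : ℝ) + ν)))
        (volume.restrict (Ioc 0 1)) := by
      apply AEStronglyMeasurable.mul
      · exact (gg_cont b m).aestronglyMeasurable.restrict
      · exact ((by measurability : Measurable fun x : ℝ => x ^ (-((m:ℝ)+ν)))).aestronglyMeasurable.restrict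
    have hint0 : IntegrableOn (fun x : ℝ => x ^ (-ν)) (Ioc 0 1) := by
      rw [← intervalIntegrable_iff_integrableOn_Ioc_of_le zero_le_one]
      apply intervalIntegral.intervalIntegrable_rpow'
      linarith
    have hint : IntegrableOn (fun x : ℝ => (b ^ m / Nat.factorial m) * x ^ (-ν)) (Ioc 0 1) :=
      hint0.const_mul _
    apply Integrable.mono' hint hmeas
    filter_upwards [ae_restrict_mem measurableSet_Ioc] with x hx
    have hx0 : 0 < x := hx.1
    rw [Real.norm_eq_abs, abs_mul, abs_of_nonneg (Real.rpow_nonneg hx0.le _)]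
    calc |gg b m x| * x ^ (-((m:ℝ) + ν)) ≤ ((b*x)^m / Nat.factorial m) * x ^ (-((m:ℝ) + ν)) := by
          apply mul_le_mul_of_nonneg_right (gg_bound b hb m x hx0.le) (Real.rpow_nonneg hx0.le _)
      _ = (b ^ m / Nat.factorial m) * x ^ (-ν) := by
          rw [mul_pow, ← Real.rpow_natCast x m, div_mul_eq_mul_div, mul_assoc,
            ← Real.rpow_add hx0]
          ring_nf
  · -- on Ioi 1
    apply IntegrableOn.congr_fun (f := fun x => Real.exp (-b * x) * x ^ (-((m:ℝ) + ν))
        - ∑ k ∈ Finset.range m, ((-b) ^ k / Nat.factorial k) * x ^ ((k : ℝ) - ((m:ℝ) + ν)))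
    · apply Integrable.sub
      · apply Integrable.mono' (exp_neg_integrableOn_Ioi 1 hb)
        · apply AEStronglyMeasurable.mul
          · exact (Real.continuous_exp.comp (continuous_const.mul continuous_id)).aestronglyMeasurable.restrict
          · exact ((by measurability : Measurable fun x : ℝ => x ^ (-((m:ℝ)+ν)))).aestronglyMeasurable.restrict
        · filter_upwards [ae_restrict_mem measurableSet_Ioi] with x hx
          rw [Real.norm_eq_abs, abs_mul, abs_of_pos (Real.exp_pos _),
            abs_of_nonneg (Real.rpow_nonneg (by linarith [mem_Ioi.mp hx]) _)]
          have h1x : (1:ℝ) ≤ x := le_of_lt hx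
          have : x ^ (-((m:ℝ) + ν)) ≤ 1 := by
            apply Real.rpow_le_one_of_one_le_of_nonpos h1x
            have : (0:ℝ) ≤ (m:ℝ) + ν := by positivity
            linarith
          nlinarith [Real.exp_pos (-b * x), this]
      · apply integrable_finset_sum
        intro k hk
        have hkm := Finset.mem_range.mp hk
        have hcast : (k : ℝ) + 1 ≤ (m : ℝ) := by exact_mod_cast hkm
        exact (integrableOn_Ioi_rpow_of_lt (by linarith) (by norm_num : (0:ℝ) < 1)).const_mul _
    · intro x hx
      exact (gmul_eq b m _ (lt_trans one_pos hx)).symm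
    · exact measurableSet_Ioi

lemma exp_rpow_tendsto (b : ℝ) (hb : 0 < b) (r : ℝ) (hr : 0 < r) :
    Tendsto (fun x : ℝ => Real.exp (-b * x) * x ^ (-r)) atTop (𝓝 0) := by
  have h1 : Tendsto (fun x : ℝ => Real.exp (-b * x)) atTop (𝓝 0) := by
    have : Tendsto (fun x : ℝ => -b * x) atTop atBot := by
      apply Tendsto.const_mul_atTop_of_neg (neg_neg_iff_pos.mpr hb) tendsto_id
    exact Real.tendsto_exp_atBot.comp this
  have h2 := tendsto_rpow_neg_atTop hr
  simpa using h1.mul h2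

lemma gg_tendsto_atTop (b : ℝ) (hb : 0 < b) (M : ℕ) (r : ℝ) (hr : 0 < r)
    (h : ∀ k : ℕ, k < M → (k : ℝ) < r) :
    Tendsto (fun x : ℝ => gg b M x * x ^ (-r)) atTop (𝓝 0) := by
  have hsum : Tendsto (fun x : ℝ => Real.exp (-b * x) * x ^ (-r)
      - ∑ k ∈ Finset.range M, ((-b) ^ k / Nat.factorial k) * x ^ ((k : ℝ) - r))
      atTop (𝓝 0) := by
    have hterm : ∀ k ∈ Finset.range M, Tendsto
        (fun x : ℝ => ((-b) ^ k / Nat.factorial k) * x ^ ((k : ℝ) - r)) atTop (𝓝 0) := by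
      intro k hk
      have hkr : (0:ℝ) < r - (k:ℝ) := by
        have := h k (Finset.mem_range.mp hk); linarith
      have := (tendsto_rpow_neg_atTop hkr).const_mul ((-b) ^ k / (Nat.factorial k : ℝ))
      simpa [show -(r - (k:ℝ)) = (k:ℝ) - r by ring] using this
    have hS : Tendsto (fun x : ℝ => ∑ k ∈ Finset.range M,
        ((-b) ^ k / Nat.factorial k) * x ^ ((k : ℝ) - r)) atTop (𝓝 0) := by
      have := tendsto_finset_sum (Finset.range M) hterm
      simpa using this
    simpa using (exp_rpow_tendsto b hb r hr).sub hS
  apply hsum.congr'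
  filter_upwards [eventually_gt_atTop 0] with x hx
  exact (gmul_eq b M r hx).symm

lemma gg_tendsto_zero (b : ℝ) (hb : 0 < b) (M : ℕ) (hM : 1 ≤ M) (r : ℝ) (hr0 : 0 < r)
    (hrM : r < M) :
    Tendsto (fun x : ℝ => gg b M x * x ^ (-r)) (nhdsWithin 0 (Ici 0)) (𝓝 0) := by
  have hMr : (0:ℝ) < (M:ℝ) - r := by linarith
  apply squeeze_zero_norm' (a := fun x : ℝ => (b ^ M / Nat.factorial M) * x ^ ((M:ℝ) - r))
  · filter_upwards [self_mem_nhdsWithin] with x (hx : (0:ℝ) ≤ x)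
    rcases eq_or_lt_of_le hx with h0 | h0
    · rw [← h0]
      rw [Real.zero_rpow (ne_of_gt hMr), Real.zero_rpow (by intro h; rw [neg_eq_zero] at h; exact hr0.ne' h)]
      simp
    · rw [Real.norm_eq_abs, abs_mul, abs_of_nonneg (Real.rpow_nonneg hx _)]
      calc |gg b M x| * x ^ (-r) ≤ ((b*x)^M / Nat.factorial M) * x ^ (-r) :=
            mul_le_mul_of_nonneg_right (gg_bound b hb M x hx) (Real.rpow_nonneg hx _)
        _ = (b ^ M / Nat.factorial M) * x ^ ((M:ℝ) - r) := by
            rw [mul_pow, ← Real.rpow_natCast x M, div_mul_eq_mul_div, mul_assoc,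
              ← Real.rpow_add h0]
            ring_nf
  · have hcont : ContinuousAt (fun x : ℝ => x ^ ((M:ℝ) - r)) 0 :=
      Real.continuousAt_rpow_const 0 _ (Or.inr hMr.le)
    have := (hcont.tendsto.const_mul (b ^ M / (Nat.factorial M : ℝ))).mono_left
      (nhdsWithin_le_nhds (s := Ici (0:ℝ)))
    simpa [Real.zero_rpow (ne_of_gt hMr)] using this

lemma gg_integral (b : ℝ) (hb : 0 < b) (ν : ℝ) (hν0 : 0 < ν) (hν1 : ν < 1) : ∀ m : ℕ,
    ∫ x in Ioi (0:ℝ), gg b m x * x ^ (-((m : ℝ) + ν)) =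
      (-1 : ℝ) ^ m * b ^ ((m : ℝ) + ν - 1) * Real.pi /
        (Real.sin (Real.pi * ν) * Real.Gamma ((m : ℝ) + ν)) := by
  have hsin : 0 < Real.sin (Real.pi * ν) := by
    apply Real.sin_pos_of_pos_of_lt_pi
    · positivity
    · nlinarith [Real.pi_pos]
  intro m
  induction m with
  | zero =>
    have h0 : ∫ x in Ioi (0:ℝ), gg b 0 x * x ^ (-(((0:ℕ) : ℝ) + ν))
        = (1/b) ^ (1-ν) * Real.Gamma (1-ν) := by
      rw [← Real.integral_rpow_mul_exp_neg_mul_Ioi (by linarith : (0:ℝ) < 1 - ν) hb]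
      apply setIntegral_congr_fun measurableSet_Ioi
      intro x hx
      simp only [gg, Finset.range_zero, Finset.sum_empty, sub_zero]
      rw [show (1:ℝ) - ν - 1 = -(((0:ℕ):ℝ) + ν) by push_cast; ring, neg_mul]
      ring
    rw [h0]
    have hΓ : Real.Gamma ν * Real.Gamma (1-ν) = Real.pi / Real.sin (Real.pi * ν) :=
      Real.Gamma_mul_Gamma_one_sub ν
    have hΓν : 0 < Real.Gamma ν := Real.Gamma_pos_of_pos hν0
    have hpow : (1/b) ^ ((1:ℝ)-ν) = b ^ (ν - 1) := by
      rw [one_div, ← Real.rpow_neg_one b, ← Real.rpow_mul hb.le,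
        show (-1:ℝ)*((1:ℝ)-ν) = ν - 1 by ring]
    rw [hpow]
    have hπ : Real.Gamma ν * Real.Gamma (1-ν) * Real.sin (Real.pi * ν) = Real.pi := by
      rw [hΓ]; field_simp
    push_cast
    rw [zero_add, pow_zero, one_mul]
    rw [eq_div_iff (by positivity)]
    linear_combination b ^ (ν - 1) * hπ
  | succ m ih =>
    have hr0 : (0:ℝ) < (m:ℝ) + ν := by positivity
    have hrne : (m:ℝ) + ν ≠ 0 := hr0.ne'
    set F : ℝ → ℝ := fun x => gg b (m+1) x * x ^ (-((m:ℝ) + ν)) / (-((m:ℝ) + ν)) with hF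
    set f' : ℝ → ℝ := fun x => (b / ((m:ℝ) + ν)) * (gg b m x * x ^ (-((m:ℝ) + ν)))
      + gg b (m+1) x * x ^ (-((m:ℝ) + ν) - 1) with hf'
    have hderiv : ∀ x ∈ Ioi (0:ℝ), HasDerivAt F (f' x) x := by
      intro x hx
      have hx0 : (0:ℝ) < x := hx
      have hg := gg_deriv b m x
      have hp : HasDerivAt (fun y : ℝ => y ^ (-((m:ℝ) + ν)))
          (-((m:ℝ) + ν) * x ^ (-((m:ℝ) + ν) - 1)) x :=
        Real.hasDerivAt_rpow_const (Or.inl hx0.ne')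
      have H := (hg.fun_mul hp).div_const (-((m:ℝ) + ν))
      refine H.congr_deriv ?_
      symm
      show (b / ((m:ℝ) + ν)) * (gg b m x * x ^ (-((m:ℝ) + ν))) + gg b (m+1) x * x ^ (-((m:ℝ) + ν) - 1) = _
      rw [eq_div_iff (neg_ne_zero.mpr hrne)]
      field_simp [hrne]
      ring
    have hint1 := gg_integrable b hb ν hν0 hν1 m
    have hint2 : IntegrableOn (fun x => gg b (m+1) x * x ^ (-((m:ℝ) + ν) - 1)) (Ioi 0) := by
      have h2 := gg_integrable b hb ν hν0 hν1 (m+1)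
      apply h2.congr_fun _ measurableSet_Ioi
      intro x hx
      congr 2
      push_cast; ring
    have hf'int : IntegrableOn f' (Ioi 0) := (hint1.const_mul _).add hint2
    have hFtop : Tendsto F atTop (𝓝 0) := by
      have h1 : Tendsto (fun x : ℝ => gg b (m+1) x * x ^ (-((m:ℝ) + ν))) atTop (𝓝 0) := by
        apply gg_tendsto_atTop b hb (m+1) _ hr0
        intro k hk
        have : (k:ℝ) ≤ (m:ℝ) := by exact_mod_cast Nat.lt_succ_iff.mp hk
        linarith
      have := h1.div_const (-((m:ℝ) + ν))
      simpa [hF] using this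
    have hF0 : F 0 = 0 := by
      rw [hF]
      simp [gg_zero b (m+1) (by omega), Real.zero_rpow (neg_ne_zero.mpr hrne)]
    have hFcont : ContinuousWithinAt F (Ici 0) 0 := by
      unfold ContinuousWithinAt
      rw [hF0]
      have h1 := gg_tendsto_zero b hb (m+1) (by omega) ((m:ℝ) + ν) hr0
        (by push_cast; linarith)
      have := h1.div_const (-((m:ℝ) + ν))
      simpa [hF] using this
    have hIBP := integral_Ioi_of_hasDerivAt_of_tendsto hFcont hderiv hf'int hFtop
    rw [hF0, sub_zero] at hIBP
    have hsplit : ∫ x in Ioi (0:ℝ), f' x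
        = (b / ((m:ℝ) + ν)) * (∫ x in Ioi (0:ℝ), gg b m x * x ^ (-((m:ℝ) + ν)))
          + ∫ x in Ioi (0:ℝ), gg b (m+1) x * x ^ (-((m:ℝ) + ν) - 1) := by
      rw [hf', integral_add (hint1.const_mul _) hint2, integral_const_mul]
    rw [hsplit] at hIBP
    have hgoal : ∫ x in Ioi (0:ℝ), gg b (m+1) x * x ^ (-((((m+1):ℕ):ℝ) + ν))
        = ∫ x in Ioi (0:ℝ), gg b (m+1) x * x ^ (-((m:ℝ) + ν) - 1) := by
      apply setIntegral_congr_fun measurableSet_Ioi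
      intro x hx
      congr 2
      push_cast; ring
    rw [hgoal, show (∫ x in Ioi (0:ℝ), gg b (m+1) x * x ^ (-((m:ℝ) + ν) - 1))
        = -(b / ((m:ℝ) + ν)) * ∫ x in Ioi (0:ℝ), gg b m x * x ^ (-((m:ℝ) + ν)) from by
      linarith [hIBP], ih]
    have hΓm : Real.Gamma ((((m+1):ℕ):ℝ) + ν) = ((m:ℝ) + ν) * Real.Gamma ((m:ℝ) + ν) := by
      rw [show ((((m+1):ℕ):ℝ) + ν) = ((m:ℝ) + ν) + 1 by push_cast; ring]
      rw [Real.Gamma_add_one hrne]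
    have hΓr : 0 < Real.Gamma ((m:ℝ) + ν) := Real.Gamma_pos_of_pos hr0
    have hbpow : b ^ ((((m+1):ℕ):ℝ) + ν - 1) = b ^ ((m:ℝ) + ν - 1) * b := by
      rw [show ((((m+1):ℕ):ℝ) + ν - 1) = ((m:ℝ) + ν - 1) + 1 by push_cast; ring,
        Real.rpow_add hb, Real.rpow_one]
    rw [hΓm, hbpow, pow_succ]
    field_simp

theorem stmt_5 (m : ℕ) (hm : 1 ≤ m) (ν : ℝ) (hν0 : 0 < ν) (hν1 : ν < 1)
    (b : ℝ) (hb : 0 < b) :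
    Tendsto
      (fun ε : ℝ =>
        (∫ x in Set.Ioi ε, Real.exp (-b * x) / x ^ ((m : ℝ) + ν)) -
          ∑ k ∈ Finset.range m,
            ((-b) ^ k / Nat.factorial k) *
              ε ^ ((k : ℝ) + 1 - m - ν) / ((m : ℝ) + ν - k - 1))
      (nhdsWithin 0 (Set.Ioi 0))
      (nhds ((-1 : ℝ) ^ m * b ^ ((m : ℝ) + ν - 1) * Real.pi /
        (Real.sin (Real.pi * ν) * Real.Gamma ((m : ℝ) + ν)))) := by
  have hm1 : (1:ℝ) ≤ (m:ℝ) := by exact_mod_cast hm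
  -- step 1 : for ε > 0 the expression equals ∫_{Ioi ε} gg
  have key : ∀ ε : ℝ, 0 < ε →
      (∫ x in Set.Ioi ε, Real.exp (-b * x) / x ^ ((m : ℝ) + ν)) -
          (∑ k ∈ Finset.range m,
            ((-b) ^ k / Nat.factorial k) *
              ε ^ ((k : ℝ) + 1 - m - ν) / ((m : ℝ) + ν - k - 1))
        = ∫ x in Ioi ε, gg b m x * x ^ (-((m : ℝ) + ν)) := by
    intro ε hε
    have hsub : Ioi ε ⊆ Ioi (0:ℝ) := Ioi_subset_Ioi hε.le
    have hgint : IntegrableOn (fun x => gg b m x * x ^ (-((m : ℝ) + ν))) (Ioi ε) :=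
      (gg_integrable b hb ν hν0 hν1 m).mono hsub le_rfl
    have hpows : ∀ k, k ∈ Finset.range m → ((k:ℝ) - ((m : ℝ) + ν)) < -1 := by
      intro k hk
      have : (k : ℝ) + 1 ≤ (m : ℝ) := by exact_mod_cast Finset.mem_range.mp hk
      linarith
    have hpint : ∀ k ∈ Finset.range m,
        IntegrableOn (fun x : ℝ => ((-b) ^ k / Nat.factorial k)
          * x ^ ((k:ℝ) - ((m : ℝ) + ν))) (Ioi ε) :=
      fun k hk => (integrableOn_Ioi_rpow_of_lt (hpows k hk) hε).const_mul _
    have hsumint : IntegrableOn (fun x : ℝ => ∑ k ∈ Finset.range m,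
        ((-b) ^ k / Nat.factorial k) * x ^ ((k:ℝ) - ((m : ℝ) + ν))) (Ioi ε) :=
      integrable_finset_sum _ hpint
    have heq1 : ∫ x in Set.Ioi ε, Real.exp (-b * x) / x ^ ((m : ℝ) + ν)
        = ∫ x in Ioi ε, (gg b m x * x ^ (-((m : ℝ) + ν))
            + ∑ k ∈ Finset.range m, ((-b) ^ k / Nat.factorial k)
                * x ^ ((k:ℝ) - ((m : ℝ) + ν))) := by
      apply setIntegral_congr_fun measurableSet_Ioi
      intro x hx
      have hx0 : 0 < x := lt_trans hε hx
      beta_reduce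
      rw [gmul_eq b m ((m : ℝ) + ν) hx0, sub_add_cancel, div_eq_mul_inv,
        ← Real.rpow_neg hx0.le]
    rw [heq1, integral_add hgint hsumint, integral_finset_sum _ hpint]
    have heq2 : ∀ k ∈ Finset.range m,
        ∫ x in Ioi ε, ((-b) ^ k / Nat.factorial k) * x ^ ((k:ℝ) - ((m : ℝ) + ν))
          = ((-b) ^ k / Nat.factorial k) * ε ^ ((k : ℝ) + 1 - m - ν)
              / ((m : ℝ) + ν - k - 1) := by
      intro k hk
      rw [integral_const_mul, integral_Ioi_rpow_of_lt (hpows k hk) hε]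
      rw [show (k:ℝ) - ((m : ℝ) + ν) + 1 = (k:ℝ) + 1 - m - ν by ring]
      have hne : (m : ℝ) + ν - k - 1 ≠ 0 := by
        have := hpows k hk; intro h; nlinarith
      have hne2 : (k:ℝ) + 1 - m - ν ≠ 0 := by
        intro h; apply hne; linarith
      field_simp
      ring
    rw [Finset.sum_congr rfl heq2]
    ring
  -- step 2 : tendsto of tail integrals
  have hint := gg_integrable b hb ν hν0 hν1 m
  have hlim : Tendsto (fun ε : ℝ => ∫ x in Ioi ε, gg b m x * x ^ (-((m : ℝ) + ν)))
      (𝓝[>] 0) (𝓝 (∫ x in Ioi (0:ℝ), gg b m x * x ^ (-((m : ℝ) + ν)))) := by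
    have hmain : Tendsto (fun ε : ℝ => ∫ x in Ioi (0:ℝ),
        (Ioi ε).indicator (fun x => gg b m x * x ^ (-((m : ℝ) + ν))) x)
        (𝓝[>] 0) (𝓝 (∫ x in Ioi (0:ℝ), gg b m x * x ^ (-((m : ℝ) + ν)))) := by
      apply tendsto_integral_filter_of_dominated_convergence
        (fun x => |gg b m x * x ^ (-((m : ℝ) + ν))|)
      · filter_upwards [self_mem_nhdsWithin] with ε (hε : (0:ℝ) < ε)
        exact hint.aestronglyMeasurable.indicator measurableSet_Ioi
      · filter_upwards [self_mem_nhdsWithin] with ε (hε : (0:ℝ) < ε)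
        filter_upwards with x
        rw [Real.norm_eq_abs, ← Real.norm_eq_abs]
        exact norm_indicator_le_norm_self _ _
      · exact hint.abs
      · filter_upwards [ae_restrict_mem measurableSet_Ioi] with x (hx : (0:ℝ) < x)
        apply tendsto_const_nhds.congr'
        filter_upwards [Ioo_mem_nhdsGT_of_mem (left_mem_Ico.mpr hx)] with ε hε
        rw [indicator_of_mem (mem_Ioi.mpr hε.2)]
    apply hmain.congr'
    filter_upwards [self_mem_nhdsWithin] with ε (hε : (0:ℝ) < ε)
    rw [setIntegral_indicator measurableSet_Ioi]
    congr 1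
    rw [Ioi_inter_Ioi, max_eq_right hε.le]
  rw [show ((-1 : ℝ) ^ m * b ^ ((m : ℝ) + ν - 1) * Real.pi /
        (Real.sin (Real.pi * ν) * Real.Gamma ((m : ℝ) + ν)))
      = ∫ x in Ioi (0:ℝ), gg b m x * x ^ (-((m : ℝ) + ν)) from
    (gg_integral b hb ν hν0 hν1 m).symm]
  apply hlim.congr'
  filter_upwards [self_mem_nhdsWithin] with ε (hε : (0:ℝ) < ε)
  exact (key ε hε).symm
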